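/- Let a > 0, ε > 0, and c, σ₁, σ₂, σ₃, σ₄ ∈ ℝ. Define φ(y) = (σ₃/(2a²) + 3σ₄/(4a³) − c)·exp(−a·y/ε) + ((σ₁/a + σ₂/a²)·(y/ε) + (σ₂/(2a))·(y/ε)²)·exp(−a·y/ε) − ((σ₃/(2a²) + 3σ₄/(4a³)) + (σ₄/(2a²))·(y/ε))·exp(−2·a·y/ε). Then: (i) for every y ∈ ℝ, −ε·φ''(y) − a·φ'(y) = (1/ε)·(σ₁·exp(−a·y/ε) + σ₂·(y/ε)·exp(−a·y/ε) + σ₃·exp(−2·a·y/ε) + σ₄·(y/ε)·exp(−2·a·y/ε)); (ii) φ(0) = −c; (iii) φ(y) → 0 as y → ∞. -/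

import Mathlib

open Real Filter

lemma gen_hasDerivAt (p0 p1 p2 q0 q1 b ε : ℝ) (hε : ε ≠ 0) (y : ℝ) :
    HasDerivAt (fun y : ℝ => (p0 + p1 * (y/ε) + p2 * (y/ε)^2) * Real.exp (-(b*y)/ε)
        + (q0 + q1 * (y/ε)) * Real.exp (-(2*b*y)/ε))
      (((p1/ε - p0*b/ε) + (2*p2/ε - p1*b/ε) * (y/ε) + (-(p2*b/ε)) * (y/ε)^2)
          * Real.exp (-(b*y)/ε)
        + ((q1/ε - 2*b*q0/ε) + (-(2*b*q1/ε)) * (y/ε)) * Real.exp (-(2*b*y)/ε)) y := by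
  have he1 : HasDerivAt (fun y : ℝ => -(b*y)/ε) (-b/ε) y := by
    simpa using (((hasDerivAt_id y).const_mul b).neg.div_const ε)
  have he2 : HasDerivAt (fun y : ℝ => -(2*b*y)/ε) (-(2*b)/ε) y := by
    simpa using (((hasDerivAt_id y).const_mul (2*b)).neg.div_const ε)
  have hE1 := he1.exp
  have hE2 := he2.exp
  have hdiv : HasDerivAt (fun y : ℝ => y/ε) (1/ε) y := by
    simpa using (hasDerivAt_id y).div_const ε
  have hP : HasDerivAt (fun y : ℝ => p0 + p1 * (y/ε) + p2 * (y/ε)^2)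
      (p1 * (1/ε) + p2 * (2 * (y/ε)^1 * (1/ε))) y := by
    simpa [Pi.add_def] using ((hasDerivAt_const y p0).add (hdiv.const_mul p1)).add ((hdiv.pow 2).const_mul p2)
  have hQ : HasDerivAt (fun y : ℝ => q0 + q1 * (y/ε)) (q1 * (1/ε)) y := by
    simpa [Pi.add_def] using (hasDerivAt_const y q0).add (hdiv.const_mul q1)
  have h := (hP.mul hE1).add (hQ.mul hE2)
  refine h.congr_deriv ?_
  ring

lemma gen_tendsto (b : ℝ) (hb : 0 < b) (n : ℕ) :
    Tendsto (fun t : ℝ => t^n * Real.exp (-(b*t))) atTop (nhds 0) := by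
  have h := (tendsto_pow_mul_exp_neg_atTop_nhds_zero n).comp (tendsto_id.const_mul_atTop hb)
  have h2 := h.const_mul ((b^n)⁻¹)
  rw [mul_zero] at h2
  refine h2.congr fun t => ?_
  have hb' : b ≠ 0 := hb.ne'
  simp only [Function.comp, id_eq]
  rw [mul_pow]
  field_simp

/-- The explicit tangential component of the first-order boundary-layer corrector:
`φ` as defined below satisfies (i) the higher-order Prandtl equation
`-ε φ'' - a φ' = (1/ε)(σ₁ e^{-ay/ε} + σ₂ (y/ε) e^{-ay/ε} + σ₃ e^{-2ay/ε} + σ₄ (y/ε) e^{-2ay/ε})`,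
(ii) `φ(0) = -c`, and (iii) `φ(y) → 0` as `y → ∞`. -/
theorem first_order_corrector_profile (a ε c σ₁ σ₂ σ₃ σ₄ : ℝ) (ha : 0 < a) (hε : 0 < ε) :
    (∀ y : ℝ,
      -ε * deriv (deriv (fun y : ℝ =>
          (σ₃ / (2 * a ^ 2) + 3 * σ₄ / (4 * a ^ 3) - c) * Real.exp (-(a * y) / ε) +
          ((σ₁ / a + σ₂ / a ^ 2) * (y / ε) + (σ₂ / (2 * a)) * (y / ε) ^ 2) *
            Real.exp (-(a * y) / ε) -
          ((σ₃ / (2 * a ^ 2) + 3 * σ₄ / (4 * a ^ 3)) + (σ₄ / (2 * a ^ 2)) * (y / ε)) *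
            Real.exp (-(2 * a * y) / ε))) y -
        a * deriv (fun y : ℝ =>
          (σ₃ / (2 * a ^ 2) + 3 * σ₄ / (4 * a ^ 3) - c) * Real.exp (-(a * y) / ε) +
          ((σ₁ / a + σ₂ / a ^ 2) * (y / ε) + (σ₂ / (2 * a)) * (y / ε) ^ 2) *
            Real.exp (-(a * y) / ε) -
          ((σ₃ / (2 * a ^ 2) + 3 * σ₄ / (4 * a ^ 3)) + (σ₄ / (2 * a ^ 2)) * (y / ε)) *
            Real.exp (-(2 * a * y) / ε)) y =
      (1 / ε) * (σ₁ * Real.exp (-(a * y) / ε) + σ₂ * (y / ε) * Real.exp (-(a * y) / ε) +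
        σ₃ * Real.exp (-(2 * a * y) / ε) + σ₄ * (y / ε) * Real.exp (-(2 * a * y) / ε))) ∧
    ((fun y : ℝ =>
        (σ₃ / (2 * a ^ 2) + 3 * σ₄ / (4 * a ^ 3) - c) * Real.exp (-(a * y) / ε) +
        ((σ₁ / a + σ₂ / a ^ 2) * (y / ε) + (σ₂ / (2 * a)) * (y / ε) ^ 2) *
          Real.exp (-(a * y) / ε) -
        ((σ₃ / (2 * a ^ 2) + 3 * σ₄ / (4 * a ^ 3)) + (σ₄ / (2 * a ^ 2)) * (y / ε)) *
          Real.exp (-(2 * a * y) / ε)) 0 = -c) ∧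
    Filter.Tendsto (fun y : ℝ =>
        (σ₃ / (2 * a ^ 2) + 3 * σ₄ / (4 * a ^ 3) - c) * Real.exp (-(a * y) / ε) +
        ((σ₁ / a + σ₂ / a ^ 2) * (y / ε) + (σ₂ / (2 * a)) * (y / ε) ^ 2) *
          Real.exp (-(a * y) / ε) -
        ((σ₃ / (2 * a ^ 2) + 3 * σ₄ / (4 * a ^ 3)) + (σ₄ / (2 * a ^ 2)) * (y / ε)) *
          Real.exp (-(2 * a * y) / ε))
      Filter.atTop (nhds 0) := by
  have hε' : ε ≠ 0 := hε.ne'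
  have ha' : a ≠ 0 := ha.ne'
  set p0 : ℝ := σ₃ / (2 * a ^ 2) + 3 * σ₄ / (4 * a ^ 3) - c with hp0
  set p1 : ℝ := σ₁ / a + σ₂ / a ^ 2 with hp1
  set p2 : ℝ := σ₂ / (2 * a) with hp2
  set q0 : ℝ := -(σ₃ / (2 * a ^ 2) + 3 * σ₄ / (4 * a ^ 3)) with hq0
  set q1 : ℝ := -(σ₄ / (2 * a ^ 2)) with hq1
  have hfun : (fun y : ℝ =>
        (σ₃ / (2 * a ^ 2) + 3 * σ₄ / (4 * a ^ 3) - c) * Real.exp (-(a * y) / ε) +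
        ((σ₁ / a + σ₂ / a ^ 2) * (y / ε) + (σ₂ / (2 * a)) * (y / ε) ^ 2) *
          Real.exp (-(a * y) / ε) -
        ((σ₃ / (2 * a ^ 2) + 3 * σ₄ / (4 * a ^ 3)) + (σ₄ / (2 * a ^ 2)) * (y / ε)) *
          Real.exp (-(2 * a * y) / ε))
      = (fun y : ℝ => (p0 + p1 * (y/ε) + p2 * (y/ε)^2) * Real.exp (-(a*y)/ε)
        + (q0 + q1 * (y/ε)) * Real.exp (-(2*a*y)/ε)) := by
    funext y
    rw [hp0, hp1, hp2, hq0, hq1]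
    ring
  refine ⟨?_, ?_, ?_⟩
  · intro y
    rw [hfun]
    have h1 : deriv (fun y : ℝ => (p0 + p1 * (y/ε) + p2 * (y/ε)^2) * Real.exp (-(a*y)/ε)
        + (q0 + q1 * (y/ε)) * Real.exp (-(2*a*y)/ε))
        = (fun y : ℝ =>
          ((p1/ε - p0*a/ε) + (2*p2/ε - p1*a/ε) * (y/ε) + (-(p2*a/ε)) * (y/ε)^2)
            * Real.exp (-(a*y)/ε)
          + ((q1/ε - 2*a*q0/ε) + (-(2*a*q1/ε)) * (y/ε)) * Real.exp (-(2*a*y)/ε)) :=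
      funext fun y => (gen_hasDerivAt p0 p1 p2 q0 q1 a ε hε' y).deriv
    rw [h1]
    have h2 : deriv (fun y : ℝ =>
          ((p1/ε - p0*a/ε) + (2*p2/ε - p1*a/ε) * (y/ε) + (-(p2*a/ε)) * (y/ε)^2)
            * Real.exp (-(a*y)/ε)
          + ((q1/ε - 2*a*q0/ε) + (-(2*a*q1/ε)) * (y/ε)) * Real.exp (-(2*a*y)/ε))
        = (fun y : ℝ =>
          (((2*p2/ε - p1*a/ε)/ε - (p1/ε - p0*a/ε)*a/ε)
            + (2*(-(p2*a/ε))/ε - (2*p2/ε - p1*a/ε)*a/ε) * (y/ε)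
            + (-((-(p2*a/ε))*a/ε)) * (y/ε)^2) * Real.exp (-(a*y)/ε)
          + (((-(2*a*q1/ε))/ε - 2*a*(q1/ε - 2*a*q0/ε)/ε)
            + (-(2*a*(-(2*a*q1/ε))/ε)) * (y/ε)) * Real.exp (-(2*a*y)/ε)) :=
      funext fun y => (gen_hasDerivAt (p1/ε - p0*a/ε) (2*p2/ε - p1*a/ε) (-(p2*a/ε))
        (q1/ε - 2*a*q0/ε) (-(2*a*q1/ε)) a ε hε' y).deriv
    rw [h2]
    rw [hp0, hp1, hp2, hq0, hq1]
    field_simp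
    ring
  · rw [hfun]
    rw [hp0, hq0]
    norm_num
    ring
  · rw [hfun]
    have hdiv : Tendsto (fun y : ℝ => y/ε) atTop atTop := tendsto_id.atTop_div_const hε
    have term : ∀ (C : ℝ) (n : ℕ) (b : ℝ), 0 < b →
        Tendsto (fun y : ℝ => C * (y/ε)^n * Real.exp (-(b*y)/ε)) atTop (nhds 0) := by
      intro C n b hb
      have h := ((gen_tendsto b hb n).comp hdiv).const_mul C
      rw [mul_zero] at h
      refine h.congr fun y => ?_
      simp only [Function.comp, id_eq]
      rw [show -(b*(y/ε)) = -(b*y)/ε by ring]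
      ring
    have h := ((((term p0 0 a ha).add (term p1 1 a ha)).add (term p2 2 a ha)).add
      (term q0 0 (2*a) (by linarith))).add (term q1 1 (2*a) (by linarith))
    rw [show ((0:ℝ)+0+0+0+0) = 0 by norm_num] at h
    refine h.congr fun y => ?_
    ring
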